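/- Let ρ : Matrix (Fin d) (Fin d) ℂ be positive semidefinite, and let R : Matrix (Fin d) (Fin d) ℂ be the orthogonal projection onto the range of ρ, i.e. R is Hermitian, R * R = R, and for all x : Fin d → ℂ, R.mulVec x = x if and only if x lies in the range of ρ.mulVecLin. Let Φ : Matrix (Fin d) (Fin d) ℂ →ₗ[ℂ] Matrix (Fin n) (Fin n) ℂ be a linear map that sends positive semidefinite matrices to positive semidefinite matrices. Then the range of (Φ R).mulVecLin equals the range of (Φ ρ).mulVecLin. -/

import Mathlib

open Matrix
open scoped ComplexOrder

private lemma eq_of_mulVec_eq' {k : ℕ} {M N : Matrix (Fin k) (Fin k) ℂ}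
    (h : ∀ x, M *ᵥ x = N *ᵥ x) : M = N := by
  ext i j
  simpa [Matrix.mulVec_single] using congrFun (h (Pi.single j 1)) i

/-- For a symmetric operator on Euclidean space, range = (ker)ᗮ. -/
private lemma range_eq_orthogonal_ker {k : ℕ}
    (T : EuclideanSpace ℂ (Fin k) →ₗ[ℂ] EuclideanSpace ℂ (Fin k)) (hT : T.IsSymmetric) :
    LinearMap.range T = (LinearMap.ker T)ᗮ := by
  apply Submodule.eq_of_le_of_finrank_le
  · rintro v ⟨x, rfl⟩
    rw [Submodule.mem_orthogonal]
    intro u hu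
    rw [← hT u x, LinearMap.mem_ker.mp hu, inner_zero_left]
  · have h1 := Submodule.finrank_add_finrank_orthogonal (LinearMap.ker T)
    have h2 := LinearMap.finrank_range_add_finrank_ker T
    omega

/-- Hermitian matrices with equal kernels have equal mulVecLin ranges. -/
private lemma range_eq_of_ker_eq {k : ℕ} {A B : Matrix (Fin k) (Fin k) ℂ}
    (hA : Aᴴ = A) (hB : Bᴴ = B) (h : ∀ x, A *ᵥ x = 0 ↔ B *ᵥ x = 0) :
    LinearMap.range A.mulVecLin = LinearMap.range B.mulVecLin := by
  have hker : LinearMap.ker (toEuclideanLin A) = LinearMap.ker (toEuclideanLin B) := by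
    ext x
    simpa [LinearMap.mem_ker, toEuclideanLin_apply] using h ((WithLp.equiv 2 _) x)
  have hrange : LinearMap.range (toEuclideanLin A) = LinearMap.range (toEuclideanLin B) := by
    rw [range_eq_orthogonal_ker _ (isHermitian_iff_isSymmetric.mp hA),
      range_eq_orthogonal_ker _ (isHermitian_iff_isSymmetric.mp hB), hker]
  ext y
  have := Submodule.ext_iff.mp hrange ((WithLp.equiv 2 (Fin k → ℂ)).symm y)
  simp [LinearMap.mem_range, toEuclideanLin_apply, mulVecLin_apply,
    WithLp.equiv, Equiv.refl] at this ⊢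
  exact ⟨fun ⟨z, hz⟩ => let ⟨w, hw⟩ := this.mp ⟨WithLp.toLp 2 z, hz⟩; ⟨w.ofLp, hw⟩,
    fun ⟨z, hz⟩ => let ⟨w, hw⟩ := this.mpr ⟨WithLp.toLp 2 z, hz⟩; ⟨w.ofLp, hw⟩⟩

theorem stmt18 {d n : ℕ} (ρ : Matrix (Fin d) (Fin d) ℂ) (hρ : ρ.PosSemidef)
    (R : Matrix (Fin d) (Fin d) ℂ) (hR1 : Rᴴ = R) (hR2 : R * R = R)
    (hR3 : ∀ x : Fin d → ℂ, R.mulVec x = x ↔ x ∈ LinearMap.range ρ.mulVecLin)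
    (Φ : Matrix (Fin d) (Fin d) ℂ →ₗ[ℂ] Matrix (Fin n) (Fin n) ℂ)
    (hΦ : ∀ M : Matrix (Fin d) (Fin d) ℂ, M.PosSemidef → (Φ M).PosSemidef) :
    LinearMap.range (Φ R).mulVecLin = LinearMap.range (Φ ρ).mulVecLin := by
  classical
  have hH := hρ.1
  set U : Matrix (Fin d) (Fin d) ℂ := (hH.eigenvectorUnitary : Matrix (Fin d) (Fin d) ℂ) with hU
  have hUU : star U * U = 1 := Unitary.coe_star_mul_self hH.eigenvectorUnitary
  set e : Fin d → ℝ := hH.eigenvalues with he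
  have he0 : ∀ i, 0 ≤ e i := hρ.eigenvalues_nonneg
  have spec : ρ = U * diagonal (RCLike.ofReal ∘ e) * star U := hH.spectral_theorem
  set f : Fin d → ℝ := fun i => if e i = 0 then 0 else 1 with hf
  set P : Matrix (Fin d) (Fin d) ℂ := U * diagonal (RCLike.ofReal ∘ f) * star U with hP
  have hcancel : ∀ X : Matrix (Fin d) (Fin d) ℂ, star U * (U * X) = X := by
    intro X
    rw [← Matrix.mul_assoc, hUU, Matrix.one_mul]
  have hmul : ∀ v w : Fin d → ℝ,
      (U * diagonal (RCLike.ofReal ∘ v) * star U) * (U * diagonal (RCLike.ofReal ∘ w) * star U)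
        = U * diagonal (RCLike.ofReal ∘ fun i => v i * w i) * star U := by
    intro v w
    simp only [Matrix.mul_assoc]
    rw [hcancel, ← Matrix.mul_assoc (diagonal (RCLike.ofReal ∘ v)), diagonal_mul_diagonal]
    have hvw : (fun i => (RCLike.ofReal ∘ v) i * (RCLike.ofReal ∘ w) i)
        = (RCLike.ofReal ∘ fun i => v i * w i : Fin d → ℂ) := by
      funext i
      simp
    rw [hvw]
  have hdiag_congr : ∀ {v w : Fin d → ℝ}, v = w →
      U * diagonal (RCLike.ofReal ∘ v) * star U = U * diagonal (RCLike.ofReal ∘ w) * star U := by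
    intro v w h
    rw [h]
  have hPρ : P * ρ = ρ := by
    rw [hP, spec, hmul]
    exact hdiag_congr (funext fun i => by by_cases h : e i = 0 <;> simp [hf, h])
  have hPH : Pᴴ = P := by
    rw [hP, star_eq_conjTranspose]
    simp only [conjTranspose_mul, conjTranspose_conjTranspose, diagonal_conjTranspose,
      Matrix.mul_assoc]
    have hst : (star (RCLike.ofReal ∘ f) : Fin d → ℂ) = RCLike.ofReal ∘ f := by
      funext i
      simp [Function.comp, Complex.conj_ofReal]
    rw [hst]
  set g : Fin d → ℝ := fun i => if e i = 0 then 0 else (e i)⁻¹ with hg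
  have hρG : ρ * (U * diagonal (RCLike.ofReal ∘ g) * star U) = P := by
    rw [spec, hmul, hP]
    exact hdiag_congr (funext fun i => by by_cases h : e i = 0 <;> simp [hg, hf, h])
  have hPmem : ∀ x, P *ᵥ x ∈ LinearMap.range ρ.mulVecLin := by
    intro x
    refine ⟨(U * diagonal (RCLike.ofReal ∘ g) * star U) *ᵥ x, ?_⟩
    rw [mulVecLin_apply, mulVec_mulVec, hρG]
  have hRP : R * P = P := by
    apply eq_of_mulVec_eq'
    intro x
    rw [← mulVec_mulVec]
    exact (hR3 _).mpr (hPmem x)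
  have hPR : P * R = R := by
    apply eq_of_mulVec_eq'
    intro x
    rw [← mulVec_mulVec]
    have hRx : R *ᵥ x ∈ LinearMap.range ρ.mulVecLin := by
      apply (hR3 _).mp
      rw [mulVec_mulVec, hR2]
    obtain ⟨y, hy⟩ := hRx
    rw [mulVecLin_apply] at hy
    rw [← hy, mulVec_mulVec, hPρ]
  have hRisP : R = P := by
    have h1 : (P * R)ᴴ = Rᴴ := by rw [hPR]
    rw [conjTranspose_mul, hPH, hR1] at h1
    rw [← hRP, h1]
  have hRpsd : R.PosSemidef := by
    have : Rᴴ * R = R := by rw [hR1, hR2]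
    rw [← this]
    exact posSemidef_conjTranspose_mul_self R
  by_cases hzero : ∀ i, e i = 0
  · have hρ0 : ρ = R := by
      rw [spec, hRisP, hP]
      exact hdiag_congr (funext fun i => by simp [hzero i, hf])
    rw [hρ0]
  · push_neg at hzero
    set s : Finset (Fin d) := Finset.univ.filter (fun i => e i ≠ 0) with hs
    have hsne : s.Nonempty := by
      obtain ⟨i, hi⟩ := hzero
      exact ⟨i, by simp [hs, hi]⟩
    have hsne' : (s.image e).Nonempty := hsne.image e
    set lam : ℝ := (s.image e).min' hsne' with hlam
    set mu : ℝ := (s.image e).max' hsne' with hmu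
    have hlam_pos : 0 < lam := by
      have hmem := (s.image e).min'_mem hsne'
      rw [Finset.mem_image] at hmem
      obtain ⟨i, hi, hei⟩ := hmem
      rw [hs, Finset.mem_filter] at hi
      rw [hlam, ← hei]
      exact lt_of_le_of_ne (he0 _) (Ne.symm hi.2)
    have hsmul : ∀ c : ℝ, (c : ℂ) • P
        = U * diagonal (RCLike.ofReal ∘ fun i => c * f i) * star U := by
      intro c
      have hd : (c : ℂ) • (diagonal (RCLike.ofReal ∘ f) : Matrix (Fin d) (Fin d) ℂ)
          = diagonal (RCLike.ofReal ∘ fun i => c * f i) := by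
        ext i j
        by_cases hij : i = j <;> simp [Matrix.diagonal_apply, hij]
      rw [hP, ← smul_mul_assoc, ← mul_smul_comm, hd]
    have hdiagsub : ∀ v w : Fin d → ℝ,
        (U * diagonal (RCLike.ofReal ∘ v) * star U) - (U * diagonal (RCLike.ofReal ∘ w) * star U)
          = U * diagonal (RCLike.ofReal ∘ fun i => v i - w i) * star U := by
      intro v w
      have hdd : (diagonal (RCLike.ofReal ∘ v) : Matrix (Fin d) (Fin d) ℂ)
          - diagonal (RCLike.ofReal ∘ w)
          = diagonal (RCLike.ofReal ∘ fun i => v i - w i) := by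
        ext i j
        by_cases hij : i = j <;> simp [Matrix.diagonal_apply, hij]
      rw [← Matrix.sub_mul, ← Matrix.mul_sub, hdd]
    have key : ∀ v : Fin d → ℝ, (∀ i, 0 ≤ v i) →
        (U * diagonal (RCLike.ofReal ∘ v) * star U).PosSemidef := by
      intro v hv
      rw [star_eq_conjTranspose]
      apply PosSemidef.mul_mul_conjTranspose_same
      rw [posSemidef_diagonal_iff]
      intro i
      simpa using Complex.zero_le_real.mpr (hv i)
    have h1 : (ρ - (lam : ℂ) • R).PosSemidef := by
      rw [hRisP, hsmul lam, spec, hdiagsub]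
      apply key
      intro i
      by_cases h : e i = 0
      · simp [hf, h]
      · have : lam ≤ e i := (s.image e).min'_le (e i) (Finset.mem_image_of_mem e (by simp [hs, h]))
        simp only [hf, if_neg h, mul_one]
        linarith
    have h2 : ((mu : ℂ) • R - ρ).PosSemidef := by
      rw [hRisP, hsmul mu, spec, hdiagsub]
      apply key
      intro i
      by_cases h : e i = 0
      · simp [hf, h]
      · have : e i ≤ mu := (s.image e).le_max' (e i) (Finset.mem_image_of_mem e (by simp [hs, h]))
        simp only [hf, if_neg h, mul_one]
        linarith
    have hA : (Φ R).PosSemidef := hΦ R hRpsd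
    have hB : (Φ ρ).PosSemidef := hΦ ρ hρ
    have hΦ1 : (Φ ρ - (lam : ℂ) • Φ R).PosSemidef := by
      have := hΦ _ h1
      rwa [map_sub, _root_.map_smul] at this
    have hΦ2 : ((mu : ℂ) • Φ R - Φ ρ).PosSemidef := by
      have := hΦ _ h2
      rwa [map_sub, _root_.map_smul] at this
    apply range_eq_of_ker_eq hA.1 hB.1
    intro x
    constructor
    · intro hx
      rw [← hB.dotProduct_mulVec_zero_iff]
      have hge : (0 : ℂ) ≤ star x ⬝ᵥ (Φ ρ) *ᵥ x := hB.dotProduct_mulVec_nonneg x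
      have hle : star x ⬝ᵥ (Φ ρ) *ᵥ x ≤ 0 := by
        have h' := hΦ2.dotProduct_mulVec_nonneg x
        rw [sub_mulVec, smul_mulVec, hx, smul_zero, zero_sub, dotProduct_neg,
          neg_nonneg] at h'
        exact h'
      exact le_antisymm hle hge
    · intro hx
      rw [← hA.dotProduct_mulVec_zero_iff]
      have hge : (0 : ℂ) ≤ star x ⬝ᵥ (Φ R) *ᵥ x := hA.dotProduct_mulVec_nonneg x
      have hle : (lam : ℂ) * (star x ⬝ᵥ (Φ R) *ᵥ x) ≤ 0 := by
        have h' := hΦ1.dotProduct_mulVec_nonneg x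
        rw [sub_mulVec, hx, zero_sub, dotProduct_neg, neg_nonneg, smul_mulVec,
          dotProduct_smul, smul_eq_mul] at h'
        exact h'
      have hz : (lam : ℂ) * (star x ⬝ᵥ (Φ R) *ᵥ x) = 0 :=
        le_antisymm hle (mul_nonneg (by exact_mod_cast hlam_pos.le) hge)
      have hlne : (lam : ℂ) ≠ 0 := by exact_mod_cast hlam_pos.ne'
      exact (mul_eq_zero.mp hz).resolve_left hlne
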